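/- The DSE discrepancy is rotation-invariant: for any orthogonal matrices R ∈ O(p) and Q ∈ O(q), DSE_r(R#μ, Q#ν) = DSE_r(μ, ν). -/
import Mathlib


open MeasureTheory ENNReal Real
open scoped RealInnerProductSpace

noncomputable section

abbrev Euc (n : ℕ) := EuclideanSpace ℝ (Fin n)
abbrev Sph (n : ℕ) := Metric.sphere (0 : Euc n) 1

/-- Set of couplings of two measures. -/
def couplings {X Y : Type*} [MeasurableSpace X] [MeasurableSpace Y]
    (μ : Measure X) (ν : Measure Y) : Set (Measure (X × Y)) :=
  {γ | γ.map Prod.fst = μ ∧ γ.map Prod.snd = ν}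

/-- `r`-Wasserstein distance on ℝ, raised to the power `r`. -/
def Wrr (r : ℝ) (α β : Measure ℝ) : ℝ≥0∞ :=
  ⨅ γ ∈ couplings α β, ∫⁻ p, ENNReal.ofReal (|p.1 - p.2| ^ r) ∂γ

/-- Pushforward of a measure on `ℝ^n` by the projection `x ↦ ⟪u, x⟫`. -/
def proj {n : ℕ} (u : Euc n) (μ : Measure (Euc n)) : Measure ℝ :=
  μ.map (fun x => ⟪u, x⟫)

/-- Admissible set of slicing distributions for an embedding `φ` with constant `C`. -/
def Mset {d n : ℕ} (φ : Sph d → Sph n) (C : ℝ) : Set (Measure (Sph d)) :=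
  {Θ | IsProbabilityMeasure Θ ∧
    ∫⁻ p, ENNReal.ofReal (abs ⟪(φ p.1 : Euc n), (φ p.2 : Euc n)⟫) ∂(Θ.prod Θ) ≤ ENNReal.ofReal C}

/-- Distributional sliced embedding discrepancy. -/
def DSE (d p q : ℕ) (r C₁ C₂ : ℝ) (μ : Measure (Euc p)) (ν : Measure (Euc q)) : ℝ≥0∞ :=
  ⨅ (φ : Sph d → Sph p) (ψ : Sph d → Sph q),
    ⨆ Θ ∈ Mset φ C₁ ∩ Mset ψ C₂,
      (∫⁻ θ, Wrr r (proj (φ θ : Euc p) μ) (proj (ψ θ : Euc q) ν) ∂Θ) ^ (1 / r)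

/-- The uniform (normalized surface) probability measure on the unit sphere of `ℝ^d`. -/
def uniformSphere (d : ℕ) : Measure (Sph d) :=
  ((volume : Measure (Euc d)).toSphere Set.univ)⁻¹ • (volume : Measure (Euc d)).toSphere

/-- Restriction of a linear isometry equivalence to the unit sphere. -/
def sphEquiv {n : ℕ} (R : Euc n ≃ₗᵢ[ℝ] Euc n) : Sph n ≃ Sph n where
  toFun x := ⟨R x, by
    have hx : ‖(x : Euc n)‖ = 1 := mem_sphere_zero_iff_norm.mp x.2
    simpa [mem_sphere_zero_iff_norm] using hx⟩
  invFun x := ⟨R.symm x, by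
    have hx : ‖(x : Euc n)‖ = 1 := mem_sphere_zero_iff_norm.mp x.2
    simpa [mem_sphere_zero_iff_norm] using hx⟩
  left_inv x := by ext : 1; simp
  right_inv x := by ext : 1; simp

lemma proj_map {n : ℕ} (R : Euc n ≃ₗᵢ[ℝ] Euc n) (u : Euc n) (μ : Measure (Euc n)) :
    proj u (μ.map R) = proj (R.symm u) μ := by
  unfold proj
  have hm : Measurable fun x : Euc n => ⟪u, x⟫ :=
    (Continuous.inner continuous_const continuous_id).measurable
  have hm2 : Measurable fun x : Euc n => ⟪R.symm u, x⟫ :=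
    (Continuous.inner continuous_const continuous_id).measurable
  rw [Measure.map_map hm R.continuous.measurable]
  congr 1
  ext x
  simp only [Function.comp_apply]
  rw [← R.inner_map_map (R.symm u) x, R.apply_symm_apply]

lemma Mset_comp {d n : ℕ} (R : Euc n ≃ₗᵢ[ℝ] Euc n) (φ : Sph d → Sph n) (C : ℝ) :
    Mset (fun θ => sphEquiv R (φ θ)) C = Mset φ C := by
  unfold Mset
  have : ∀ (a b : Sph n), ⟪((sphEquiv R a : Sph n) : Euc n), ((sphEquiv R b : Sph n) : Euc n)⟫
      = ⟪(a : Euc n), (b : Euc n)⟫ := by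
    intro a b
    simp [sphEquiv, R.inner_map_map]
  ext Θ
  simp only [Set.mem_setOf_eq, this]

/-- DSE is rotation invariant. -/
theorem stmt13 (d p q : ℕ) (r C₁ C₂ : ℝ) (hr : 1 ≤ r)
    (μ : Measure (Euc p)) (ν : Measure (Euc q))
    [IsProbabilityMeasure μ] [IsProbabilityMeasure ν]
    (R : Euc p ≃ₗᵢ[ℝ] Euc p) (Q : Euc q ≃ₗᵢ[ℝ] Euc q) :
    DSE d p q r C₁ C₂ (μ.map R) (ν.map Q) = DSE d p q r C₁ C₂ μ ν := by
  unfold DSE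
  have key : ∀ (φ : Sph d → Sph p) (ψ : Sph d → Sph q),
      (⨆ Θ ∈ Mset φ C₁ ∩ Mset ψ C₂,
        (∫⁻ θ, Wrr r (proj (φ θ : Euc p) (μ.map R)) (proj (ψ θ : Euc q) (ν.map Q)) ∂Θ) ^ (1 / r))
      = ⨆ Θ ∈ Mset (fun θ => sphEquiv R.symm (φ θ)) C₁ ∩ Mset (fun θ => sphEquiv Q.symm (ψ θ)) C₂,
        (∫⁻ θ, Wrr r (proj ((sphEquiv R.symm (φ θ) : Sph p) : Euc p) μ)
          (proj ((sphEquiv Q.symm (ψ θ) : Sph q) : Euc q) ν) ∂Θ) ^ (1 / r) := by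
    intro φ ψ
    rw [Mset_comp, Mset_comp]
    have h1 : ∀ θ, proj (φ θ : Euc p) (μ.map R) = proj ((sphEquiv R.symm (φ θ) : Sph p) : Euc p) μ := by
      intro θ
      rw [proj_map R]
      rfl
    have h2 : ∀ θ, proj (ψ θ : Euc q) (ν.map Q) = proj ((sphEquiv Q.symm (ψ θ) : Sph q) : Euc q) ν := by
      intro θ
      rw [proj_map Q]
      rfl
    simp only [h1, h2]
  simp only [key]
  let e : (Sph d → Sph p) ≃ (Sph d → Sph p) :=
    Equiv.arrowCongr (Equiv.refl _) (sphEquiv R.symm)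
  let e' : (Sph d → Sph q) ≃ (Sph d → Sph q) :=
    Equiv.arrowCongr (Equiv.refl _) (sphEquiv Q.symm)
  let G : (Sph d → Sph p) → (Sph d → Sph q) → ℝ≥0∞ := fun φ ψ =>
    ⨆ Θ ∈ Mset φ C₁ ∩ Mset ψ C₂,
      (∫⁻ θ, Wrr r (proj (φ θ : Euc p) μ) (proj (ψ θ : Euc q) ν) ∂Θ) ^ (1 / r)
  show (⨅ φ, ⨅ ψ, G (e φ) (e' ψ)) = ⨅ φ, ⨅ ψ, G φ ψ
  calc (⨅ φ, ⨅ ψ, G (e φ) (e' ψ)) = ⨅ φ, ⨅ ψ, G (e φ) ψ :=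
        iInf_congr fun φ => e'.iInf_comp (g := G (e φ))
    _ = ⨅ φ, ⨅ ψ, G φ ψ := e.iInf_comp (g := fun φ => ⨅ ψ, G φ ψ)
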